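/- Let d = 2 and T = 2, with marginals μ_{1,1} = δ_0, μ_{2,1} = (1/4)(δ_{−2} + δ_{−1} + δ_1 + δ_2), and μ_{1,2} = μ_{2,2} = (1/2)(δ_{−1} + δ_1). Then ℳ(μ̌) is not a singleton, yet for every π ∈ ℳ(μ̌) one has E_π[X_{2,1} X_{2,2}] = 0; in particular every π ∈ ℳ(μ̌) is simultaneously an optimizer of both the maximization and the minimization MMOT problem with cost c(x) = x_{2,1} x_{2,2}. -/

import Mathlib

open MeasureTheory Filter
open scoped ENNReal

namespace MMOT

/-- Path space `𝒳 = (ℝ^d)^T`. -/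
abbrev Path (T d : ℕ) := Fin T → Fin d → ℝ

/-- σ-algebra generated by the coordinates `X_0, …, X_t` (0-indexed). -/
noncomputable def pastSigma (T d : ℕ) (t : ℕ) : MeasurableSpace (Path T d) :=
  ⨆ s : Fin T, ⨆ _ : (s : ℕ) ≤ t, MeasurableSpace.comap (fun x => x s) inferInstance

def HasMarginals {T d : ℕ} (π : Measure (Path T d)) (μ : Fin T → Fin d → Measure ℝ) : Prop :=
  ∀ t i, π.map (fun x => x t i) = μ t i

/-- `E_π[X_{t+1,i} | X_0,…,X_t]`. -/
noncomputable def condNext {T d : ℕ} (π : Measure (Path T d)) (t : ℕ) (ht : t + 1 < T)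
    (i : Fin d) : Path T d → ℝ :=
  π[fun x => x ⟨t + 1, ht⟩ i | pastSigma T d t]

def IsMartingaleMeasure {T d : ℕ} (π : Measure (Path T d)) : Prop :=
  ∀ (t : ℕ) (ht : t + 1 < T) (i : Fin d),
    condNext π t ht i =ᵐ[π] fun x => x ⟨t, Nat.lt_of_succ_lt ht⟩ i

/-- The set `ℳ(μ̌)` of calibrated martingale measures. -/
def MartSet {T d : ℕ} (μ : Fin T → Fin d → Measure ℝ) : Set (Measure (Path T d)) :=
  {π | IsProbabilityMeasure π ∧ HasMarginals π μ ∧ IsMartingaleMeasure π}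

/-! ### Auxiliary lemmas -/

lemma pastSigma_zero :
    pastSigma 2 2 0 = MeasurableSpace.comap (fun x : Path 2 2 => x 0) inferInstance := by
  apply le_antisymm
  · apply iSup_le; intro s; apply iSup_le; intro hs
    have hs0 : s = 0 := Fin.ext (by omega)
    subst hs0; exact le_rfl
  · exact le_iSup_of_le 0 (le_iSup_of_le (by norm_num) le_rfl)

lemma pastSigma_le : pastSigma 2 2 0 ≤ (inferInstance : MeasurableSpace (Path 2 2)) := by
  rw [pastSigma_zero]
  exact (measurable_pi_apply 0).comap_le

lemma meas0 (i : Fin 2) : Measurable[pastSigma 2 2 0] (fun x : Path 2 2 => x 0 i) := by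
  rw [pastSigma_zero]
  exact (measurable_pi_apply i).comp (Measurable.of_comap_le le_rfl)

lemma measti (t i : Fin 2) : Measurable (fun x : Path 2 2 => x t i) :=
  (measurable_pi_apply i).comp (measurable_pi_apply t)

lemma ae_mem_of_map (π : Measure (Path 2 2)) (t i : Fin 2) (S : Set ℝ) (hS : MeasurableSet S)
    (h : π.map (fun x => x t i) Sᶜ = 0) : ∀ᵐ x ∂π, x t i ∈ S := by
  rw [Measure.map_apply (measti t i) hS.compl] at h
  exact h

/-- Every calibrated martingale measure gives zero covariance. -/
lemma integral_zero_of_mart (π : Measure (Path 2 2)) [IsProbabilityMeasure π]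
    (h00m : π.map (fun x => x 0 0) = Measure.dirac (0:ℝ))
    (h10m : π.map (fun x => x 1 0) = ((1 : ℝ≥0∞) / 4) •
      (Measure.dirac (-2 : ℝ) + Measure.dirac (-1 : ℝ) +
        Measure.dirac (1 : ℝ) + Measure.dirac (2 : ℝ)))
    (h01m : π.map (fun x => x 0 1) = ((1 : ℝ≥0∞) / 2) • (Measure.dirac (-1:ℝ) + Measure.dirac (1:ℝ)))
    (h11m : π.map (fun x => x 1 1) = ((1 : ℝ≥0∞) / 2) • (Measure.dirac (-1:ℝ) + Measure.dirac (1:ℝ)))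
    (hmart : ∀ i : Fin 2, condNext π 0 (by norm_num) i =ᵐ[π] fun x => x 0 i) :
    ∫ x, x 1 0 * x 1 1 ∂π = 0 := by
  have hm := pastSigma_le
  haveI : SigmaFinite (π.trim hm) := inferInstance
  have h00 : ∀ᵐ x ∂π, x 0 0 = 0 := by
    have := ae_mem_of_map π 0 0 {0} (measurableSet_singleton 0) (by
      rw [h00m, Measure.dirac_apply' _ (measurableSet_singleton (0:ℝ)).compl]; simp)
    simpa using this
  have h01 : ∀ᵐ x ∂π, x 0 1 = -1 ∨ x 0 1 = 1 := by
    have := ae_mem_of_map π 0 1 {-1, 1} (by measurability) (by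
      rw [h01m]
      have hms : MeasurableSet ({-1,1} : Set ℝ)ᶜ := by measurability
      simp [Measure.dirac_apply' _ hms])
    simpa using this
  have h11 : ∀ᵐ x ∂π, x 1 1 = -1 ∨ x 1 1 = 1 := by
    have := ae_mem_of_map π 1 1 {-1, 1} (by measurability) (by
      rw [h11m]
      have hms : MeasurableSet ({-1,1} : Set ℝ)ᶜ := by measurability
      simp [Measure.dirac_apply' _ hms])
    simpa using this
  have h10 : ∀ᵐ x ∂π, |x 1 0| ≤ 2 := by
    have := ae_mem_of_map π 1 0 (Set.Icc (-2) 2) measurableSet_Icc (by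
      rw [h10m]
      have hms : MeasurableSet (Set.Icc (-2:ℝ) 2)ᶜ := measurableSet_Icc.compl
      simp [Measure.dirac_apply' _ hms, Set.indicator_apply]
      norm_num)
    filter_upwards [this] with x hx
    rw [abs_le]; exact hx
  have int11 : Integrable (fun x => x 1 1) π := by
    refine (integrable_const (1:ℝ)).mono' (measti 1 1).aestronglyMeasurable ?_
    filter_upwards [h11] with x hx
    rcases hx with h | h <;> simp [h]
  have int10 : Integrable (fun x => x 1 0) π := by
    refine (integrable_const (2:ℝ)).mono' (measti 1 0).aestronglyMeasurable ?_
    filter_upwards [h10] with x hx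
    exact hx
  have int0111 : Integrable ((fun x : Path 2 2 => x 0 1) * (fun x => x 1 1)) π := by
    refine (integrable_const (1:ℝ)).mono'
      ((measti 0 1).mul (measti 1 1)).aestronglyMeasurable ?_
    filter_upwards [h01, h11] with x hx hy
    rcases hx with h | h <;> rcases hy with h' | h' <;> simp [h, h', Pi.mul_apply]
  have int0110 : Integrable ((fun x : Path 2 2 => x 0 1) * (fun x => x 1 0)) π := by
    refine (integrable_const (2:ℝ)).mono'
      ((measti 0 1).mul (measti 1 0)).aestronglyMeasurable ?_
    filter_upwards [h01, h10] with x hx hy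
    rcases hx with h | h <;> simp [h, Pi.mul_apply, abs_mul] <;> simpa using hy
  have hmart0 : π[fun x => x 1 0 | pastSigma 2 2 0] =ᵐ[π] fun x => x 0 0 := hmart 0
  have hmart1 : π[fun x => x 1 1 | pastSigma 2 2 0] =ᵐ[π] fun x => x 0 1 := hmart 1
  have pullA := condExp_mul_of_stronglyMeasurable_left (m := pastSigma 2 2 0)
    (meas0 1).stronglyMeasurable int0111 int11
  have keyA : ∫ x, x 0 1 * x 1 1 ∂π = 1 := by
    have h1 : ∫ x, x 0 1 * x 1 1 ∂π
        = ∫ x, (π[(fun x : Path 2 2 => x 0 1) * (fun x => x 1 1) | pastSigma 2 2 0]) x ∂π :=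
      (integral_condExp hm).symm
    rw [h1, integral_congr_ae pullA, integral_congr_ae (by
      filter_upwards [hmart1, h01] with x hx hx01
      show x 0 1 * _ = (1:ℝ)
      rw [hx]
      rcases hx01 with h | h <;> simp [h] : (fun x : Path 2 2 => x 0 1) * (π[fun x => x 1 1 | pastSigma 2 2 0]) =ᵐ[π] fun _ => (1:ℝ))]
    simp
  have hprod : ∀ᵐ x ∂π, x 0 1 * x 1 1 = 1 := by
    have hnn : 0 ≤ᵐ[π] fun x => 1 - x 0 1 * x 1 1 := by
      filter_upwards [h01, h11] with x hx hy
      rcases hx with h | h <;> rcases hy with h' | h' <;> simp [h, h']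
    have hint : Integrable (fun x => 1 - x 0 1 * x 1 1) π := (integrable_const 1).sub int0111
    have hz : ∫ x, (1 - x 0 1 * x 1 1) ∂π = 0 := by
      have h2 := integral_sub (integrable_const (1:ℝ)) int0111
      simp only [Pi.mul_apply] at h2
      rw [h2, keyA]; simp
    have := (integral_eq_zero_iff_of_nonneg_ae hnn hint).mp hz
    filter_upwards [this] with x hx
    have : (1:ℝ) - x 0 1 * x 1 1 = 0 := hx
    linarith
  have heq : ∀ᵐ x ∂π, x 1 1 = x 0 1 := by
    filter_upwards [hprod, h01, h11] with x hp hx hy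
    rcases hx with h | h <;> rcases hy with h' | h' <;> simp [h, h'] at hp ⊢ <;> linarith
  have pullC := condExp_mul_of_stronglyMeasurable_left (m := pastSigma 2 2 0)
    (meas0 1).stronglyMeasurable int0110 int10
  have : ∫ x, x 1 0 * x 1 1 ∂π = ∫ x, x 0 1 * x 1 0 ∂π := by
    apply integral_congr_ae
    filter_upwards [heq] with x hx
    rw [hx]; ring
  rw [this, show (∫ x, x 0 1 * x 1 0 ∂π)
      = ∫ x, (π[(fun x : Path 2 2 => x 0 1) * (fun x => x 1 0) | pastSigma 2 2 0]) x ∂π from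
    (integral_condExp hm).symm, integral_congr_ae pullC,
    integral_congr_ae (by
      filter_upwards [hmart0, h00] with x hx hx00
      show x 0 1 * _ = (0:ℝ)
      rw [hx, hx00, mul_zero] : (fun x : Path 2 2 => x 0 1) * (π[fun x => x 1 0 | pastSigma 2 2 0]) =ᵐ[π] fun _ => (0:ℝ))]
  simp

/-! ### The two explicit measures -/

def Pt (e a : ℝ) : Path 2 2 := ![![0, e], ![a, e]]

@[simp] lemma Pt00 (e a : ℝ) : Pt e a 0 0 = 0 := rfl
@[simp] lemma Pt01 (e a : ℝ) : Pt e a 0 1 = e := rfl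
@[simp] lemma Pt10 (e a : ℝ) : Pt e a 1 0 = a := rfl
@[simp] lemma Pt11 (e a : ℝ) : Pt e a 1 1 = e := rfl
@[simp] lemma Pt0 (e a : ℝ) : Pt e a 0 = ![0, e] := rfl

noncomputable def pi1 : Measure (Path 2 2) :=
  ((1:ℝ≥0∞)/8) • (.dirac (Pt 1 (-2)) + .dirac (Pt 1 (-1)) + .dirac (Pt 1 1) + .dirac (Pt 1 2)
    + .dirac (Pt (-1) (-2)) + .dirac (Pt (-1) (-1)) + .dirac (Pt (-1) 1) + .dirac (Pt (-1) 2))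

noncomputable def pi2 : Measure (Path 2 2) :=
  ((1:ℝ≥0∞)/4) • (.dirac (Pt 1 (-2)) + .dirac (Pt 1 2)
    + .dirac (Pt (-1) (-1)) + .dirac (Pt (-1) 1))

lemma e8_2 : (1/8:ℝ≥0∞) * 2 = 1/4 := by
  rw [show (8:ℝ≥0∞) = 4*2 by norm_num, one_div, ENNReal.mul_inv (by norm_num) (by norm_num),
    mul_assoc, ENNReal.inv_mul_cancel (by norm_num) (by norm_num), mul_one, one_div]
lemma e8_4 : (1/8:ℝ≥0∞) * 4 = 1/2 := by
  rw [show (8:ℝ≥0∞) = 2*4 by norm_num, one_div, ENNReal.mul_inv (by norm_num) (by norm_num),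
    mul_assoc, ENNReal.inv_mul_cancel (by norm_num) (by norm_num), mul_one, one_div]
lemma e4_2 : (1/4:ℝ≥0∞) * 2 = 1/2 := by
  rw [show (4:ℝ≥0∞) = 2*2 by norm_num, one_div, ENNReal.mul_inv (by norm_num) (by norm_num),
    mul_assoc, ENNReal.inv_mul_cancel (by norm_num) (by norm_num), mul_one, one_div]

instance : IsProbabilityMeasure pi1 := by
  constructor
  simp only [pi1, Measure.smul_apply, Measure.add_apply, measure_univ, smul_eq_mul]
  calc (1/8 : ℝ≥0∞) * (1+1+1+1+1+1+1+1) = 1/8 * 8 := by norm_num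
  _ = 1 := ENNReal.div_mul_cancel (by norm_num) (by norm_num)

instance : IsProbabilityMeasure pi2 := by
  constructor
  simp only [pi2, Measure.smul_apply, Measure.add_apply, measure_univ, smul_eq_mul]
  calc (1/4 : ℝ≥0∞) * (1+1+1+1) = 1/4 * 4 := by norm_num
  _ = 1 := ENNReal.div_mul_cancel (by norm_num) (by norm_num)

lemma map1 (t i : Fin 2) : pi1.map (fun x => x t i) =
    ((1:ℝ≥0∞)/8) • (.dirac (Pt 1 (-2) t i) + .dirac (Pt 1 (-1) t i) + .dirac (Pt 1 1 t i)
    + .dirac (Pt 1 2 t i) + .dirac (Pt (-1) (-2) t i) + .dirac (Pt (-1) (-1) t i)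
    + .dirac (Pt (-1) 1 t i) + .dirac (Pt (-1) 2 t i)) := by
  simp only [pi1, Measure.map_smul, Measure.map_add _ _ (measti t i),
    Measure.map_dirac' (measti t i)]

lemma map2 (t i : Fin 2) : pi2.map (fun x => x t i) =
    ((1:ℝ≥0∞)/4) • (.dirac (Pt 1 (-2) t i) + .dirac (Pt 1 2 t i)
    + .dirac (Pt (-1) (-1) t i) + .dirac (Pt (-1) 1 t i)) := by
  simp only [pi2, Measure.map_smul, Measure.map_add _ _ (measti t i),
    Measure.map_dirac' (measti t i)]

lemma map1_00 : pi1.map (fun x => x 0 0) = Measure.dirac (0:ℝ) := by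
  rw [map1]
  simp only [Pt00]
  ext s hs
  simp only [Measure.smul_apply, Measure.add_apply, smul_eq_mul]
  calc (1/8:ℝ≥0∞) * (Measure.dirac (0:ℝ) s + _ + _ + _ + _ + _ + _ + _)
      = (1/8 * 8) * Measure.dirac (0:ℝ) s := by ring
  _ = _ := by rw [ENNReal.div_mul_cancel (by norm_num) (by norm_num), one_mul]

lemma map1_10 : pi1.map (fun x => x 1 0) = ((1:ℝ≥0∞)/4) •
    (Measure.dirac (-2:ℝ) + Measure.dirac (-1:ℝ) + Measure.dirac (1:ℝ) + Measure.dirac (2:ℝ)) := by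
  rw [map1]
  simp only [Pt10]
  ext s hs
  simp only [Measure.smul_apply, Measure.add_apply, smul_eq_mul]
  calc (1/8:ℝ≥0∞) * (Measure.dirac (-2:ℝ) s + Measure.dirac (-1:ℝ) s + Measure.dirac (1:ℝ) s
        + Measure.dirac (2:ℝ) s + Measure.dirac (-2:ℝ) s + Measure.dirac (-1:ℝ) s
        + Measure.dirac (1:ℝ) s + Measure.dirac (2:ℝ) s)
      = (1/8 * 2) * (Measure.dirac (-2:ℝ) s + Measure.dirac (-1:ℝ) s + Measure.dirac (1:ℝ) s
        + Measure.dirac (2:ℝ) s) := by ring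
  _ = _ := by rw [e8_2]

@[simp] lemma Pt_1 (e a : ℝ) (t : Fin 2) : Pt e a t 1 = e := by fin_cases t <;> rfl

lemma map1_1 (t : Fin 2) : pi1.map (fun x => x t 1) =
    ((1:ℝ≥0∞)/2) • (Measure.dirac (-1:ℝ) + Measure.dirac (1:ℝ)) := by
  rw [map1]
  simp only [Pt_1]
  ext s hs
  simp only [Measure.smul_apply, Measure.add_apply, smul_eq_mul]
  calc (1/8:ℝ≥0∞) * (Measure.dirac (1:ℝ) s + Measure.dirac (1:ℝ) s + Measure.dirac (1:ℝ) s
        + Measure.dirac (1:ℝ) s + Measure.dirac (-1:ℝ) s + Measure.dirac (-1:ℝ) s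
        + Measure.dirac (-1:ℝ) s + Measure.dirac (-1:ℝ) s)
      = (1/8 * 4) * (Measure.dirac (-1:ℝ) s + Measure.dirac (1:ℝ) s) := by ring
  _ = _ := by rw [e8_4]

lemma map2_00 : pi2.map (fun x => x 0 0) = Measure.dirac (0:ℝ) := by
  rw [map2]
  simp only [Pt00]
  ext s hs
  simp only [Measure.smul_apply, Measure.add_apply, smul_eq_mul]
  calc (1/4:ℝ≥0∞) * (Measure.dirac (0:ℝ) s + _ + _ + _)
      = (1/4 * 4) * Measure.dirac (0:ℝ) s := by ring
  _ = _ := by rw [ENNReal.div_mul_cancel (by norm_num) (by norm_num), one_mul]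

lemma map2_10 : pi2.map (fun x => x 1 0) = ((1:ℝ≥0∞)/4) •
    (Measure.dirac (-2:ℝ) + Measure.dirac (-1:ℝ) + Measure.dirac (1:ℝ) + Measure.dirac (2:ℝ)) := by
  rw [map2]
  simp only [Pt10]
  ext s hs
  simp only [Measure.smul_apply, Measure.add_apply, smul_eq_mul]
  ring

lemma map2_1 (t : Fin 2) : pi2.map (fun x => x t 1) =
    ((1:ℝ≥0∞)/2) • (Measure.dirac (-1:ℝ) + Measure.dirac (1:ℝ)) := by
  rw [map2]
  simp only [Pt_1]
  ext s hs
  simp only [Measure.smul_apply, Measure.add_apply, smul_eq_mul]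
  calc (1/4:ℝ≥0∞) * (Measure.dirac (1:ℝ) s + Measure.dirac (1:ℝ) s + Measure.dirac (-1:ℝ) s
        + Measure.dirac (-1:ℝ) s)
      = (1/4 * 2) * (Measure.dirac (-1:ℝ) s + Measure.dirac (1:ℝ) s) := by ring
  _ = _ := by rw [e4_2]

/-! ### Martingale property of the explicit measures -/

lemma integrable_dirac_path {f : Path 2 2 → ℝ} (hf : Measurable f) (p : Path 2 2) :
    Integrable f (Measure.dirac p) := by
  have h : f =ᵐ[Measure.dirac p] fun _ => f p := by
    rw [MeasureTheory.ae_dirac_eq]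
    exact Filter.eventually_pure.mpr rfl
  exact (integrable_const (f p)).congr h.symm

lemma int_pi1 {f : Path 2 2 → ℝ} (hf : Measurable f) : Integrable f pi1 := by
  rw [pi1]
  refine Integrable.smul_measure ?_ (by norm_num)
  exact ((((((((integrable_dirac_path hf _).add_measure (integrable_dirac_path hf _)).add_measure
    (integrable_dirac_path hf _)).add_measure (integrable_dirac_path hf _)).add_measure
    (integrable_dirac_path hf _)).add_measure (integrable_dirac_path hf _)).add_measure
    (integrable_dirac_path hf _)).add_measure (integrable_dirac_path hf _))

lemma int_pi2 {f : Path 2 2 → ℝ} (hf : Measurable f) : Integrable f pi2 := by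
  rw [pi2]
  refine Integrable.smul_measure ?_ (by norm_num)
  exact ((((integrable_dirac_path hf _).add_measure (integrable_dirac_path hf _)).add_measure
    (integrable_dirac_path hf _)).add_measure (integrable_dirac_path hf _))

lemma setInt1 {f : Path 2 2 → ℝ} (hf : Measurable f) {s : Set (Path 2 2)} :
    ∫ x in s, f x ∂pi1 = (1/8 : ℝ) * (s.indicator f (Pt 1 (-2)) + s.indicator f (Pt 1 (-1))
      + s.indicator f (Pt 1 1) + s.indicator f (Pt 1 2) + s.indicator f (Pt (-1) (-2))
      + s.indicator f (Pt (-1) (-1)) + s.indicator f (Pt (-1) 1) + s.indicator f (Pt (-1) 2)) := by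
  classical
  have hI : ∀ p : Path 2 2, Integrable f ((Measure.dirac p).restrict s) :=
    fun p => (integrable_dirac_path hf p).restrict
  rw [pi1]
  rw [Measure.restrict_smul, Measure.restrict_add, Measure.restrict_add, Measure.restrict_add,
    Measure.restrict_add, Measure.restrict_add, Measure.restrict_add, Measure.restrict_add]
  rw [integral_smul_measure]
  rw [integral_add_measure (by exact ((((((hI _).add_measure (hI _)).add_measure (hI _)).add_measure (hI _)).add_measure (hI _)).add_measure (hI _)).add_measure (hI _)) (hI _),
      integral_add_measure (by exact (((((hI _).add_measure (hI _)).add_measure (hI _)).add_measure (hI _)).add_measure (hI _)).add_measure (hI _)) (hI _),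
      integral_add_measure (by exact ((((hI _).add_measure (hI _)).add_measure (hI _)).add_measure (hI _)).add_measure (hI _)) (hI _),
      integral_add_measure (by exact (((hI _).add_measure (hI _)).add_measure (hI _)).add_measure (hI _)) (hI _),
      integral_add_measure (by exact ((hI _).add_measure (hI _)).add_measure (hI _)) (hI _),
      integral_add_measure (by exact (hI _).add_measure (hI _)) (hI _),
      integral_add_measure (hI _) (hI _)]
  simp only [setIntegral_dirac, Set.indicator_apply]
  rw [smul_eq_mul]
  norm_num

lemma setInt2 {f : Path 2 2 → ℝ} (hf : Measurable f) {s : Set (Path 2 2)} :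
    ∫ x in s, f x ∂pi2 = (1/4 : ℝ) * (s.indicator f (Pt 1 (-2)) + s.indicator f (Pt 1 2)
      + s.indicator f (Pt (-1) (-1)) + s.indicator f (Pt (-1) 1)) := by
  classical
  have hI : ∀ p : Path 2 2, Integrable f ((Measure.dirac p).restrict s) :=
    fun p => (integrable_dirac_path hf p).restrict
  rw [pi2]
  rw [Measure.restrict_smul, Measure.restrict_add, Measure.restrict_add, Measure.restrict_add]
  rw [integral_smul_measure]
  rw [integral_add_measure (by exact ((hI _).add_measure (hI _)).add_measure (hI _)) (hI _),
      integral_add_measure (by exact (hI _).add_measure (hI _)) (hI _),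
      integral_add_measure (hI _) (hI _)]
  simp only [setIntegral_dirac, Set.indicator_apply]
  rw [smul_eq_mul]
  norm_num

/-- Characterisation of the martingale property via set integrals over `σ(X_0)`. -/
lemma mart_of (π : Measure (Path 2 2)) [IsProbabilityMeasure π] (i : Fin 2)
    (hb1 : Integrable (fun x : Path 2 2 => x 1 i) π)
    (hb0 : Integrable (fun x : Path 2 2 => x 0 i) π)
    (heq : ∀ t : Set (Fin 2 → ℝ), MeasurableSet t →
      ∫ x in (fun x : Path 2 2 => x 0) ⁻¹' t, x 0 i ∂π
        = ∫ x in (fun x : Path 2 2 => x 0) ⁻¹' t, x 1 i ∂π) :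
    ∀ ht : 0 + 1 < 2, condNext π 0 ht i =ᵐ[π] fun x => x 0 i := by
  intro ht
  haveI : SigmaFinite (π.trim pastSigma_le) := inferInstance
  refine (ae_eq_condExp_of_forall_setIntegral_eq pastSigma_le hb1
    (fun s _ _ => hb0.integrableOn) (fun s hs _ => ?_)
    ((meas0 i).stronglyMeasurable.aestronglyMeasurable)).symm
  rw [pastSigma_zero] at hs
  obtain ⟨t, ht', rfl⟩ := hs
  exact heq t ht'

lemma mart_pi1 : IsMartingaleMeasure pi1 := by
  intro t ht i
  have ht0 : t = 0 := by omega
  subst ht0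
  refine mart_of pi1 i (int_pi1 (measti 1 i)) (int_pi1 (measti 0 i)) (fun u hu => ?_) ht
  rw [setInt1 (measti 0 i), setInt1 (measti 1 i)]
  classical
  simp only [Set.indicator_apply, Set.mem_preimage, Pt0]
  by_cases h1 : ![(0:ℝ), 1] ∈ u <;> by_cases h2 : ![(0:ℝ), -1] ∈ u <;>
    fin_cases i <;> simp [h1, h2]

lemma mart_pi2 : IsMartingaleMeasure pi2 := by
  intro t ht i
  have ht0 : t = 0 := by omega
  subst ht0
  refine mart_of pi2 i (int_pi2 (measti 1 i)) (int_pi2 (measti 0 i)) (fun u hu => ?_) ht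
  rw [setInt2 (measti 0 i), setInt2 (measti 1 i)]
  classical
  simp only [Set.indicator_apply, Set.mem_preimage, Pt0]
  by_cases h1 : ![(0:ℝ), 1] ∈ u <;> by_cases h2 : ![(0:ℝ), -1] ∈ u <;>
    fin_cases i <;> simp [h1, h2]

lemma Pt_ne₁ {e a e' a' : ℝ} (h : a ≠ a') : Pt e a ≠ Pt e' a' :=
  fun hh => h (by simpa using congrFun (congrFun hh 1) 0)

lemma Pt_ne₂ {e a e' a' : ℝ} (h : e ≠ e') : Pt e a ≠ Pt e' a' :=
  fun hh => h (by simpa using congrFun (congrFun hh 0) 1)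

lemma dirac_ne {p q : Path 2 2} (h : p ≠ q) : Measure.dirac p {q} = 0 := by
  rw [Measure.dirac_apply' _ (measurableSet_singleton q)]
  simp [h]

lemma pi1_ne_pi2 : pi1 ≠ pi2 := by
  intro h
  have h1 : pi1 {Pt 1 1} = 1/8 := by
    simp only [pi1, Measure.smul_apply, Measure.add_apply, smul_eq_mul]
    rw [dirac_ne (Pt_ne₁ (by norm_num)), dirac_ne (Pt_ne₁ (by norm_num)),
      show Measure.dirac (Pt 1 1) {Pt 1 1} = 1 by simp, dirac_ne (Pt_ne₁ (by norm_num)),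
      dirac_ne (Pt_ne₂ (by norm_num)), dirac_ne (Pt_ne₂ (by norm_num)),
      dirac_ne (Pt_ne₂ (by norm_num)), dirac_ne (Pt_ne₂ (by norm_num))]
    simp
  have h2 : pi2 {Pt 1 1} = 0 := by
    simp only [pi2, Measure.smul_apply, Measure.add_apply, smul_eq_mul]
    rw [dirac_ne (Pt_ne₁ (by norm_num)), dirac_ne (Pt_ne₁ (by norm_num)),
      dirac_ne (Pt_ne₂ (by norm_num)), dirac_ne (Pt_ne₂ (by norm_num))]
    simp
  rw [h, h2] at h1
  exact absurd h1.symm (by norm_num)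

lemma marg1 (μ : Fin 2 → Fin 2 → Measure ℝ)
    (h11 : μ 0 0 = Measure.dirac (0 : ℝ))
    (h21 : μ 1 0 = ((1 : ℝ≥0∞) / 4) •
      (Measure.dirac (-2 : ℝ) + Measure.dirac (-1 : ℝ) +
        Measure.dirac (1 : ℝ) + Measure.dirac (2 : ℝ)))
    (h12 : μ 0 1 = ((1 : ℝ≥0∞) / 2) • (Measure.dirac (-1 : ℝ) + Measure.dirac (1 : ℝ)))
    (h22 : μ 1 1 = ((1 : ℝ≥0∞) / 2) • (Measure.dirac (-1 : ℝ) + Measure.dirac (1 : ℝ))) :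
    HasMarginals pi1 μ := by
  intro t i
  have ht : t = 0 ∨ t = 1 := by omega
  have hi : i = 0 ∨ i = 1 := by omega
  rcases ht with rfl | rfl <;> rcases hi with rfl | rfl
  · rw [h11]; exact map1_00
  · rw [h12]; exact map1_1 0
  · rw [h21]; exact map1_10
  · rw [h22]; exact map1_1 1

lemma marg2 (μ : Fin 2 → Fin 2 → Measure ℝ)
    (h11 : μ 0 0 = Measure.dirac (0 : ℝ))
    (h21 : μ 1 0 = ((1 : ℝ≥0∞) / 4) •
      (Measure.dirac (-2 : ℝ) + Measure.dirac (-1 : ℝ) +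
        Measure.dirac (1 : ℝ) + Measure.dirac (2 : ℝ)))
    (h12 : μ 0 1 = ((1 : ℝ≥0∞) / 2) • (Measure.dirac (-1 : ℝ) + Measure.dirac (1 : ℝ)))
    (h22 : μ 1 1 = ((1 : ℝ≥0∞) / 2) • (Measure.dirac (-1 : ℝ) + Measure.dirac (1 : ℝ))) :
    HasMarginals pi2 μ := by
  intro t i
  have ht : t = 0 ∨ t = 1 := by omega
  have hi : i = 0 ∨ i = 1 := by omega
  rcases ht with rfl | rfl <;> rcases hi with rfl | rfl
  · rw [h11]; exact map2_00
  · rw [h12]; exact map2_1 0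
  · rw [h21]; exact map2_10
  · rw [h22]; exact map2_1 1

theorem example_nonunique_optimizers (μ : Fin 2 → Fin 2 → Measure ℝ)
    (h11 : μ 0 0 = Measure.dirac (0 : ℝ))
    (h21 : μ 1 0 = ((1 : ℝ≥0∞) / 4) •
      (Measure.dirac (-2 : ℝ) + Measure.dirac (-1 : ℝ) +
        Measure.dirac (1 : ℝ) + Measure.dirac (2 : ℝ)))
    (h12 : μ 0 1 = ((1 : ℝ≥0∞) / 2) • (Measure.dirac (-1 : ℝ) + Measure.dirac (1 : ℝ)))
    (h22 : μ 1 1 = ((1 : ℝ≥0∞) / 2) • (Measure.dirac (-1 : ℝ) + Measure.dirac (1 : ℝ))) :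
    (∃ π ∈ MartSet μ, ∃ π' ∈ MartSet μ, π ≠ π') ∧
    (∀ π ∈ MartSet μ, ∫ x, x 1 0 * x 1 1 ∂π = 0) ∧
    (∀ π ∈ MartSet μ,
      (∀ π' ∈ MartSet μ, ∫ x, x 1 0 * x 1 1 ∂π' ≤ ∫ x, x 1 0 * x 1 1 ∂π) ∧
      (∀ π' ∈ MartSet μ, ∫ x, x 1 0 * x 1 1 ∂π ≤ ∫ x, x 1 0 * x 1 1 ∂π')) := by
  have hzero : ∀ π ∈ MartSet μ, ∫ x, x 1 0 * x 1 1 ∂π = 0 := by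
    intro π hπ
    obtain ⟨hp, hmarg, hmart⟩ := hπ
    haveI := hp
    exact integral_zero_of_mart π ((hmarg 0 0).trans h11) ((hmarg 1 0).trans h21)
      ((hmarg 0 1).trans h12) ((hmarg 1 1).trans h22)
      (fun i => hmart 0 (by norm_num) i)
  refine ⟨⟨pi1, ⟨inferInstance, marg1 μ h11 h21 h12 h22, mart_pi1⟩,
      pi2, ⟨inferInstance, marg2 μ h11 h21 h12 h22, mart_pi2⟩, pi1_ne_pi2⟩, hzero, ?_⟩
  intro π hπ
  exact ⟨fun π' hπ' => by rw [hzero π hπ, hzero π' hπ'],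
    fun π' hπ' => by rw [hzero π hπ, hzero π' hπ']⟩

end MMOT
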